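/- Continuity and positivity of the expert summary: assume conditions (N1), (Q1), and that for every (u,v) ∈ [0,C]² the map t ↦ ν(u)·G(t)·Φ₀(U(t)) + ν(v)·G(t)·Φ₁(U(t)) is coercive (tends to +∞ as |t| → ∞) and strictly convex on ℝ. Then the map F : [0,C]² → ℝ is continuous, and F(u,v) > 0 for every (u,v) ∈ [0,C]². -/

import Mathlib

/-- Logistic envelope `Φ₀(u) = log(1 + e^{-u})`. -/
noncomputable def Phi0 (u : ℝ) : ℝ := Real.log (1 + Real.exp (-u))

/-- Logistic envelope `Φ₁(u) = log(1 + e^{u})`. -/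
noncomputable def Phi1 (u : ℝ) : ℝ := Real.log (1 + Real.exp u)

/-- Row objective `t ↦ ν(u)·G(t)·Φ₀(U(t)) + ν(v)·G(t)·Φ₁(U(t))`. -/
noncomputable def rowObj (ν G U : ℝ → ℝ) (u v t : ℝ) : ℝ :=
  ν u * G t * Phi0 (U t) + ν v * G t * Phi1 (U t)

/-- Expert summary `F(u,v) = inf_t rowObj ν G U u v t`. -/
noncomputable def expertSummary (ν G U : ℝ → ℝ) (u v : ℝ) : ℝ :=
  ⨅ t : ℝ, rowObj ν G U u v t

lemma phi0_pos (x : ℝ) : 0 < Phi0 x := by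
  have : (1 : ℝ) < 1 + Real.exp (-x) := by linarith [Real.exp_pos (-x)]
  exact Real.log_pos this

lemma phi1_pos (x : ℝ) : 0 < Phi1 x := by
  have : (1 : ℝ) < 1 + Real.exp x := by linarith [Real.exp_pos x]
  exact Real.log_pos this

lemma phi0_cont : Continuous Phi0 := by
  rw [continuous_iff_continuousAt]
  intro x
  exact (Real.continuousAt_log (by positivity)).comp (by fun_prop)

lemma phi1_cont : Continuous Phi1 := by
  rw [continuous_iff_continuousAt]
  intro x
  exact (Real.continuousAt_log (by positivity)).comp (by fun_prop)

section main

variable {C : ℝ} {ν G U : ℝ → ℝ}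

lemma rowObj_pos (hνpos : ∀ u ∈ Set.Icc 0 C, 0 < ν u) (hGpos : ∀ t, 0 < G t)
    {u v : ℝ} (hu : u ∈ Set.Icc 0 C) (hv : v ∈ Set.Icc 0 C) (t : ℝ) :
    0 < rowObj ν G U u v t := by
  have h1 := hνpos u hu
  have h2 := hνpos v hv
  have h3 := hGpos t
  have h4 := phi0_pos (U t)
  have h5 := phi1_pos (U t)
  unfold rowObj
  positivity

lemma rowObj_bdd (hνpos : ∀ u ∈ Set.Icc 0 C, 0 < ν u) (hGpos : ∀ t, 0 < G t)
    {u v : ℝ} (hu : u ∈ Set.Icc 0 C) (hv : v ∈ Set.Icc 0 C) :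
    BddBelow (Set.range (rowObj ν G U u v)) := by
  refine ⟨0, ?_⟩
  rintro x ⟨t, rfl⟩
  exact (rowObj_pos hνpos hGpos hu hv t).le

/-- Key multiplicative comparison between row objectives. -/
lemma rowObj_ratio (hνpos : ∀ u ∈ Set.Icc 0 C, 0 < ν u) (hGpos : ∀ t, 0 < G t)
    {u v u' v' : ℝ} (hu : u ∈ Set.Icc 0 C) (hv : v ∈ Set.Icc 0 C)
    (hu' : u' ∈ Set.Icc 0 C) (hv' : v' ∈ Set.Icc 0 C) (t : ℝ) :
    rowObj ν G U u' v' t ≤ max (ν u' / ν u) (ν v' / ν v) * rowObj ν G U u v t := by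
  set r := max (ν u' / ν u) (ν v' / ν v) with hr
  have h1 := hνpos u hu
  have h2 := hνpos v hv
  have hru : ν u' ≤ r * ν u := by
    rw [← div_le_iff₀ h1]; exact le_max_left _ _
  have hrv : ν v' ≤ r * ν v := by
    rw [← div_le_iff₀ h2]; exact le_max_right _ _
  have hg := hGpos t
  have hp0 := phi0_pos (U t)
  have hp1 := phi1_pos (U t)
  have ha : 0 ≤ G t * Phi0 (U t) := by positivity
  have hb : 0 ≤ G t * Phi1 (U t) := by positivity
  have := mul_le_mul_of_nonneg_right hru ha
  have := mul_le_mul_of_nonneg_right hrv hb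
  unfold rowObj
  nlinarith

/-- Key multiplicative comparison between expert summaries. -/
lemma expertSummary_ratio (hνpos : ∀ u ∈ Set.Icc 0 C, 0 < ν u) (hGpos : ∀ t, 0 < G t)
    {u v u' v' : ℝ} (hu : u ∈ Set.Icc 0 C) (hv : v ∈ Set.Icc 0 C)
    (hu' : u' ∈ Set.Icc 0 C) (hv' : v' ∈ Set.Icc 0 C) :
    expertSummary ν G U u' v' ≤
      max (ν u' / ν u) (ν v' / ν v) * expertSummary ν G U u v := by
  set r := max (ν u' / ν u) (ν v' / ν v) with hr
  have hrpos : 0 < r := lt_max_of_lt_left (by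
    exact div_pos (hνpos u' hu') (hνpos u hu))
  rw [mul_comm, ← div_le_iff₀ hrpos]
  apply le_ciInf
  intro t
  rw [div_le_iff₀ hrpos, mul_comm]
  calc expertSummary ν G U u' v' ≤ rowObj ν G U u' v' t :=
        ciInf_le (rowObj_bdd hνpos hGpos hu' hv') t
    _ ≤ r * rowObj ν G U u v t := rowObj_ratio hνpos hGpos hu hv hu' hv' t

end main

/-- **Continuity and positivity of the expert summary.**
Under (N1), (Q1), and coercivity plus strict convexity of the row objective for every
`(u,v) ∈ [0,C]²`, the map `F : [0,C]² → ℝ` is continuous and strictly positive. -/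
theorem expert_summary_continuous_positive
    (C : ℝ) (hC : 0 < C)
    -- (N1)
    (ν ν' : ℝ → ℝ)
    (hνcont : ContinuousOn ν (Set.Icc 0 C))
    (hνpos : ∀ u ∈ Set.Icc 0 C, 0 < ν u)
    (hνderiv : ∀ u ∈ Set.Ioo 0 C, HasDerivAt ν (ν' u) u)
    (hν'pos : ∀ u ∈ Set.Ioo 0 C, 0 < ν' u)
    -- (Q1)
    (G U : ℝ → ℝ)
    (hGcont : Continuous G) (hGpos : ∀ t, 0 < G t)
    (hUcont : Continuous U) (hUmono : StrictMono U) (hUsurj : Function.Surjective U)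
    -- coercivity and strict convexity for every (u,v) ∈ [0,C]²
    (hQ2' : ∀ u ∈ Set.Icc 0 C, ∀ v ∈ Set.Icc 0 C,
      Filter.Tendsto (fun t => rowObj ν G U u v t) (Filter.cocompact ℝ) Filter.atTop ∧
      StrictConvexOn ℝ Set.univ (fun t => rowObj ν G U u v t)) :
    ContinuousOn (fun p : ℝ × ℝ => expertSummary ν G U p.1 p.2)
        (Set.Icc 0 C ×ˢ Set.Icc 0 C) ∧
    ∀ u ∈ Set.Icc (0 : ℝ) C, ∀ v ∈ Set.Icc (0 : ℝ) C,
      0 < expertSummary ν G U u v := by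
  constructor
  · -- continuity
    rintro ⟨u₀, v₀⟩ hp₀
    obtain ⟨hu₀, hv₀⟩ := Set.mem_prod.mp hp₀
    set S := Set.Icc (0:ℝ) C ×ˢ Set.Icc (0:ℝ) C with hS
    set F : ℝ × ℝ → ℝ := fun p => expertSummary ν G U p.1 p.2 with hF
    have hνu₀ : 0 < ν u₀ := hνpos u₀ hu₀
    have hνv₀ : 0 < ν v₀ := hνpos v₀ hv₀
    -- upper and lower comparison functions
    set r : ℝ × ℝ → ℝ := fun p => max (ν p.1 / ν u₀) (ν p.2 / ν v₀) with hrdef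
    set r' : ℝ × ℝ → ℝ := fun p => max (ν u₀ / ν p.1) (ν v₀ / ν p.2) with hr'def
    have hν1 : ContinuousOn (fun p : ℝ × ℝ => ν p.1) S :=
      hνcont.comp continuous_fst.continuousOn (fun p hp => (Set.mem_prod.mp hp).1)
    have hν2 : ContinuousOn (fun p : ℝ × ℝ => ν p.2) S :=
      hνcont.comp continuous_snd.continuousOn (fun p hp => (Set.mem_prod.mp hp).2)
    have hrcont : ContinuousOn r S :=
      (continuous_max.comp_continuousOn
        ((hν1.div continuousOn_const (fun p _ => hνu₀.ne')).prodMk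
          (hν2.div continuousOn_const (fun p _ => hνv₀.ne'))) :)
    have hr'cont : ContinuousOn r' S :=
      (continuous_max.comp_continuousOn
        ((continuousOn_const.div hν1 (fun p hp => (hνpos _ (Set.mem_prod.mp hp).1).ne')).prodMk
          (continuousOn_const.div hν2 (fun p hp => (hνpos _ (Set.mem_prod.mp hp).2).ne'))) :)
    have hrval : r (u₀, v₀) = 1 := by
      simp [hrdef, div_self hνu₀.ne', div_self hνv₀.ne']
    have hr'val : r' (u₀, v₀) = 1 := by
      simp [hr'def, div_self hνu₀.ne', div_self hνv₀.ne']
    -- bounds on S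
    have hupper : ∀ p ∈ S, F p ≤ r p * F (u₀, v₀) := by
      rintro ⟨u, v⟩ hp
      obtain ⟨hu, hv⟩ := Set.mem_prod.mp hp
      exact expertSummary_ratio hνpos hGpos hu₀ hv₀ hu hv
    have hlower : ∀ p ∈ S, F (u₀, v₀) / r' p ≤ F p := by
      rintro ⟨u, v⟩ hp
      obtain ⟨hu, hv⟩ := Set.mem_prod.mp hp
      have hr'pos : 0 < r' (u, v) := lt_max_of_lt_left
        (div_pos hνu₀ (hνpos u hu))
      rw [div_le_iff₀ hr'pos, mul_comm]
      exact expertSummary_ratio hνpos hGpos hu hv hu₀ hv₀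
    -- squeeze
    have htup : Filter.Tendsto (fun p => r p * F (u₀, v₀)) (nhdsWithin (u₀, v₀) S)
        (nhds (F (u₀, v₀))) := by
      have := (hrcont (u₀, v₀) hp₀).tendsto
      rw [hrval] at this
      have := this.mul (tendsto_const_nhds (x := F (u₀, v₀)))
      simpa using this
    have htlow : Filter.Tendsto (fun p => F (u₀, v₀) / r' p) (nhdsWithin (u₀, v₀) S)
        (nhds (F (u₀, v₀))) := by
      have := (hr'cont (u₀, v₀) hp₀).tendsto
      rw [hr'val] at this
      have := (tendsto_const_nhds (x := F (u₀, v₀))).div this one_ne_zero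
      rw [div_one] at this; exact this
    refine tendsto_of_tendsto_of_tendsto_of_le_of_le' htlow htup ?_ ?_
    · filter_upwards [self_mem_nhdsWithin] with p hp using hlower p hp
    · filter_upwards [self_mem_nhdsWithin] with p hp using hupper p hp
  · -- positivity
    intro u hu v hv
    have hcont : Continuous (rowObj ν G U u v) := by
      unfold rowObj
      exact ((continuous_const.mul hGcont).mul (phi0_cont.comp hUcont)).add
        ((continuous_const.mul hGcont).mul (phi1_cont.comp hUcont))
    obtain ⟨t₀, ht₀⟩ := hcont.exists_forall_le (hQ2' u hu v hv).1
    have h1 : rowObj ν G U u v t₀ ≤ expertSummary ν G U u v := le_ciInf ht₀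
    exact lt_of_lt_of_le (rowObj_pos hνpos hGpos hu hv t₀) h1
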